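/- arXiv:2412.17148 — 2 statements merged into one kernel-verified Lean document; each statement's English description precedes it below -/
import Mathlib

section
/- Let d ≥ 2, 0 < α < d, and let g : ℝ^d → [0,∞) be bounded, measurable, with compact support. Set h = g·1_{B_2^c} (the restriction of g to the complement of the ball of radius 2 centered at the origin). Then there is a constant N = N(d, α) such that for every x with |x| ≤ 1, the gradient of P_α h satisfies |D(P_α h)(x)| ≤ N · M_α g(0). -/
set_option synthInstance.maxHeartbeats 400000
set_option maxHeartbeats 1000000


open MeasureTheory ENNReal Metric Set

/-- The Riesz potential `P_α f (x) = ∫ f(y) / |x-y|^(d-α) dy`. -/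
noncomputable def rieszPotential (d : ℕ) (α : ℝ) (f : EuclideanSpace ℝ (Fin d) → ℝ)
    (x : EuclideanSpace ℝ (Fin d)) : ℝ :=
  ∫ y, f y / ‖x - y‖ ^ ((d : ℝ) - α)

/-- The fractional maximal function `M_β g (x) = sup_{ρ>0} ρ^β ⨍_{B_ρ(x)} |g|`. -/
noncomputable def fracMaximal (d : ℕ) (β : ℝ) (g : EuclideanSpace ℝ (Fin d) → ℝ)
    (x : EuclideanSpace ℝ (Fin d)) : ℝ≥0∞ :=
  ⨆ (ρ : ℝ) (_ : 0 < ρ), ENNReal.ofReal (ρ ^ β * ⨍ y in ball x ρ, |g y|)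

abbrev Euc (d : ℕ) := EuclideanSpace ℝ (Fin d)

lemma key0 {d : ℕ} (z : Euc d) (p : ℝ) : ((‖z‖ ^ 2 : ℝ)) ^ p = ‖z‖ ^ (2 * p) := by
  rw [← Real.rpow_natCast ‖z‖ 2, ← Real.rpow_mul (norm_nonneg z)]
  norm_num

noncomputable def auxG (d : ℕ) (β : ℝ) (h : Euc d → ℝ) (x y : Euc d) : ℝ :=
  h y * ((‖x - y‖ ^ 2 : ℝ)) ^ (β / 2)

noncomputable def auxF' (d : ℕ) (β : ℝ) (h : Euc d → ℝ) (x y : Euc d) : Euc d →L[ℝ] ℝ :=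
  (h y * (β * ((‖x - y‖ ^ 2 : ℝ)) ^ (β / 2 - 1))) • innerSL ℝ (x - y)

lemma auxG_hasFDerivAt {d : ℕ} {β : ℝ} {h : Euc d → ℝ} {y x : Euc d} (hxy : x ≠ y) :
    HasFDerivAt (fun x => auxG d β h x y) (auxF' d β h x y) x := by
  have h1 : HasFDerivAt (fun x : Euc d => x - y) (ContinuousLinearMap.id ℝ (Euc d)) x :=
    (hasFDerivAt_id x).sub_const y
  have h2 := h1.norm_sq
  have hne : (‖x - y‖ : ℝ) ^ 2 ≠ 0 :=
    pow_ne_zero _ (norm_ne_zero_iff.2 (sub_ne_zero.2 hxy))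
  have h3 := h2.rpow_const (p := β / 2) (Or.inl hne)
  have h4 := h3.const_mul (h y)
  simp only [auxG, auxF']
  refine h4.congr_fderiv ?_
  ext v
  simp only [ContinuousLinearMap.coe_smul', Pi.smul_apply, innerSL_apply_apply,
    ContinuousLinearMap.smul_apply, ContinuousLinearMap.coe_comp', Function.comp_apply,
    ContinuousLinearMap.coe_id', id_eq, smul_eq_mul, nsmul_eq_mul, Nat.cast_ofNat]
  ring

lemma auxG_hasFDerivAt_zero {d : ℕ} {β : ℝ} {h : Euc d → ℝ} {y : Euc d} (hy : h y = 0)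
    (x : Euc d) : HasFDerivAt (fun x => auxG d β h x y) (auxF' d β h x y) x := by
  have e1 : (fun x : Euc d => auxG d β h x y) = fun _ => (0 : ℝ) := by
    funext x'; simp [auxG, hy]
  have e2 : auxF' d β h x y = 0 := by simp [auxF', hy]
  rw [e1, e2]
  exact hasFDerivAt_const 0 x

lemma aux_deriv (d : ℕ) (α : ℝ) (hα0 : 0 < α) (hαd : α < d)
    (h : Euc d → ℝ) (hm : Measurable h) (hint : Integrable h) (h0 : ∀ y, 0 ≤ h y)
    (hsupp : ∀ y, h y ≠ 0 → 2 ≤ ‖y‖) (x₀ : Euc d) (hx₀ : ‖x₀‖ ≤ 1) :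
    ∃ D : Euc d →L[ℝ] ℝ, HasFDerivAt (rieszPotential d α h) D x₀ ∧
      ENNReal.ofReal ‖D‖ ≤ ENNReal.ofReal (((d : ℝ) - α) * 4 ^ ((d : ℝ) + 1 - α)) *
        ∫⁻ y, ENNReal.ofReal (h y * ‖y‖ ^ (α - (d : ℝ) - 1)) := by
  set β : ℝ := α - (d : ℝ) with hβdef
  have hβneg : β < 0 := by simp only [hβdef]; linarith
  have hdα : (0:ℝ) < (d : ℝ) - α := by linarith
  set Cst : ℝ := ((d : ℝ) - α) * 4 ^ ((d : ℝ) + 1 - α) with hCstdef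
  have hCst0 : 0 ≤ Cst := by positivity
  set bound : Euc d → ℝ := fun y => Cst * (h y * ‖y‖ ^ (β - 1)) with hbounddef
  have hboundm : Measurable bound := by fun_prop
  have hbound0 : ∀ y, 0 ≤ bound y := by
    intro y
    have := h0 y
    positivity
  have hbound_int : Integrable bound := by
    refine (hint.abs.const_mul (Cst * 2 ^ (β - 1))).mono'
      hboundm.aestronglyMeasurable (ae_of_all _ fun y => ?_)
    rw [Real.norm_eq_abs, abs_of_nonneg (hbound0 y)]
    by_cases hy : h y = 0
    · simp only [hbounddef, hy, zero_mul, mul_zero]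
      positivity
    · have h2y := hsupp y hy
      have : ‖y‖ ^ (β - 1) ≤ (2:ℝ) ^ (β - 1) :=
        Real.rpow_le_rpow_of_nonpos two_pos h2y (by linarith)
      have hhy : |h y| = h y := abs_of_nonneg (h0 y)
      rw [hhy]
      calc Cst * (h y * ‖y‖ ^ (β - 1)) ≤ Cst * (h y * (2:ℝ) ^ (β - 1)) := by
            apply mul_le_mul_of_nonneg_left _ hCst0
            exact mul_le_mul_of_nonneg_left this (h0 y)
        _ = Cst * 2 ^ (β - 1) * h y := by ring
  have h_bound_pt : ∀ y : Euc d, ∀ x ∈ ball x₀ (4⁻¹ : ℝ), ‖auxF' d β h x y‖ ≤ bound y := by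
    intro y x hx
    by_cases hy : h y = 0
    · have : auxF' d β h x y = 0 := by simp [auxF', hy]
      rw [this, norm_zero]
      exact hbound0 y
    · have h2y := hsupp y hy
      have hxx₀ : ‖x - x₀‖ < 4⁻¹ := by
        rw [mem_ball, dist_eq_norm] at hx; exact hx
      have hxn : ‖x‖ ≤ 5/4 := by
        have := norm_sub_norm_le x x₀
        linarith
      have hlow : ‖y‖ / 4 ≤ ‖x - y‖ := by
        have h1 : ‖y‖ - ‖x‖ ≤ ‖y - x‖ := norm_sub_norm_le y x
        rw [norm_sub_rev] at h1
        linarith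
      have hpos : (0:ℝ) < ‖x - y‖ := lt_of_lt_of_le (by linarith) hlow
      have hnorm : ‖auxF' d β h x y‖ = h y * (((d:ℝ) - α) * ‖x - y‖ ^ (β - 1)) := by
        rw [auxF', norm_smul _ ((innerSL ℝ) (x - y)), innerSL_apply_norm,
          Real.norm_eq_abs, abs_mul, abs_mul,
          abs_of_nonneg (h0 y), abs_of_neg hβneg,
          abs_of_nonneg (Real.rpow_nonneg (by positivity) _), key0]
        rw [show (2 : ℝ) * (β / 2 - 1) = (β - 1) - 1 by ring]
        rw [show -β = (d:ℝ) - α by simp [hβdef]]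
        rw [mul_assoc, mul_assoc]
        congr 2
        rw [Real.rpow_sub hpos, Real.rpow_one, div_mul_cancel₀ _ hpos.ne']
      rw [hnorm]
      have hr : ‖x - y‖ ^ (β - 1) ≤ (‖y‖ / 4) ^ (β - 1) :=
        Real.rpow_le_rpow_of_nonpos (by linarith) hlow (by linarith)
      have heq : (‖y‖ / 4) ^ (β - 1) = ‖y‖ ^ (β - 1) * 4 ^ ((d:ℝ) + 1 - α) := by
        rw [Real.div_rpow (norm_nonneg y) (by norm_num), div_eq_mul_inv,
          ← Real.rpow_neg (by norm_num : (0:ℝ) ≤ 4)]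
        congr 1
        simp only [hβdef]; ring
      calc h y * (((d:ℝ) - α) * ‖x - y‖ ^ (β - 1))
          ≤ h y * (((d:ℝ) - α) * (‖y‖ / 4) ^ (β - 1)) := by
            apply mul_le_mul_of_nonneg_left _ (h0 y)
            exact mul_le_mul_of_nonneg_left hr hdα.le
        _ = bound y := by rw [heq, hbounddef, hCstdef]; ring
  have hdiff : ∀ y : Euc d, ∀ x ∈ ball x₀ (4⁻¹ : ℝ),
      HasFDerivAt (fun x => auxG d β h x y) (auxF' d β h x y) x := by
    intro y x hx
    by_cases hy : h y = 0
    · exact auxG_hasFDerivAt_zero hy x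
    · apply auxG_hasFDerivAt
      intro hxy
      have h2y := hsupp y hy
      have hxx₀ : ‖x - x₀‖ < 4⁻¹ := by rw [mem_ball, dist_eq_norm] at hx; exact hx
      have hxn : ‖x‖ ≤ 5/4 := by have := norm_sub_norm_le x x₀; linarith
      rw [hxy] at hxn
      linarith
  have hGmeas : ∀ x : Euc d, AEStronglyMeasurable (fun y => auxG d β h x y) volume := by
    intro x
    apply Measurable.aestronglyMeasurable
    unfold auxG
    fun_prop
  have hGint : Integrable (fun y => auxG d β h x₀ y) := by
    refine hint.abs.mono' (hGmeas x₀) (ae_of_all _ fun y => ?_)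
    rw [Real.norm_eq_abs, auxG, abs_mul]
    by_cases hy : h y = 0
    · simp [hy]
    · have h2y := hsupp y hy
      have hlow : (1:ℝ) ≤ ‖x₀ - y‖ := by
        have h1 : ‖y‖ - ‖x₀‖ ≤ ‖y - x₀‖ := norm_sub_norm_le y x₀
        rw [norm_sub_rev] at h1
        linarith
      have h1 : |(‖x₀ - y‖ ^ 2 : ℝ) ^ (β / 2)| ≤ 1 := by
        rw [abs_of_nonneg (Real.rpow_nonneg (by positivity) _)]
        apply Real.rpow_le_one_of_one_le_of_nonpos
        · nlinarith
        · linarith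
      calc |h y| * |(‖x₀ - y‖ ^ 2 : ℝ) ^ (β / 2)| ≤ |h y| * 1 :=
            mul_le_mul_of_nonneg_left h1 (abs_nonneg _)
        _ = |h y| := mul_one _
  have hF'meas : AEStronglyMeasurable (fun y => auxF' d β h x₀ y) volume := by
    unfold auxF'
    have hc : Measurable fun y : Euc d => h y * (β * ((‖x₀ - y‖ ^ 2 : ℝ)) ^ (β / 2 - 1)) := by
      fun_prop
    have hL : Continuous fun y : Euc d => innerSL ℝ (x₀ - y) :=
      (innerSL ℝ).continuous.comp (continuous_const.sub continuous_id)
    exact (hc.stronglyMeasurable.smul hL.stronglyMeasurable).aestronglyMeasurable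
  have hmain := hasFDerivAt_integral_of_dominated_of_fderiv_le
    (F := fun x y => auxG d β h x y) (F' := fun x y => auxF' d β h x y)
    (bound := bound) (x₀ := x₀) (s := ball x₀ (4⁻¹ : ℝ)) (ball_mem_nhds x₀ (by norm_num))
    (Filter.Eventually.of_forall fun x => hGmeas x) hGint hF'meas
    (ae_of_all _ h_bound_pt) hbound_int (ae_of_all _ hdiff)
  have hEq : rieszPotential d α h = fun x => ∫ y, auxG d β h x y := by
    funext x
    unfold rieszPotential
    refine integral_congr_ae (ae_of_all _ fun y => ?_)
    show h y / ‖x - y‖ ^ ((d : ℝ) - α) = auxG d β h x y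
    rw [auxG, div_eq_mul_inv, ← Real.rpow_neg (norm_nonneg _), key0]
    congr 1
    simp only [hβdef]; ring
  refine ⟨∫ y, auxF' d β h x₀ y, ?_, ?_⟩
  · rw [hEq]; exact hmain
  · have hD : ‖∫ y, auxF' d β h x₀ y‖ ≤ ∫ y, bound y :=
      norm_integral_le_of_norm_le hbound_int
        (ae_of_all _ fun y => h_bound_pt y x₀ (mem_ball_self (by norm_num)))
    calc ENNReal.ofReal ‖∫ y, auxF' d β h x₀ y‖ ≤ ENNReal.ofReal (∫ y, bound y) :=
          ENNReal.ofReal_le_ofReal hD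
      _ = ∫⁻ y, ENNReal.ofReal (bound y) :=
          ofReal_integral_eq_lintegral_ofReal hbound_int (ae_of_all _ hbound0)
      _ = ENNReal.ofReal Cst * ∫⁻ y, ENNReal.ofReal (h y * ‖y‖ ^ (β - 1)) := by
          rw [← lintegral_const_mul' _ _ ENNReal.ofReal_ne_top]
          congr 1
          funext y
          rw [hbounddef, ENNReal.ofReal_mul hCst0]
      _ = ENNReal.ofReal (((d : ℝ) - α) * 4 ^ ((d : ℝ) + 1 - α)) *
            ∫⁻ y, ENNReal.ofReal (h y * ‖y‖ ^ (α - (d : ℝ) - 1)) := by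
          exact rfl

lemma aux_ball_bound (d : ℕ) (α : ℝ) (hαd : α < d)
    (g : Euc d → ℝ) (hg0 : ∀ x, 0 ≤ g x) (hgi : Integrable g)
    (ρ : ℝ) (hρ : 0 < ρ) :
    ∫⁻ y in ball (0 : Euc d) ρ, ENNReal.ofReal (g y) ≤
      volume (ball (0 : Euc d) 1) * ENNReal.ofReal (ρ ^ ((d : ℝ) - α)) * fracMaximal d α g 0 := by
  have hne : volume (ball (0 : Euc d) ρ) ≠ ⊤ := measure_ball_lt_top.ne
  have hposm : volume (ball (0 : Euc d) ρ) ≠ 0 := (measure_ball_pos _ _ hρ).ne'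
  have htne : (volume (ball (0 : Euc d) ρ)).toReal ≠ 0 :=
    (ENNReal.toReal_pos hposm hne).ne'
  have h1 : ∫ y in ball (0 : Euc d) ρ, |g y| = ∫ y in ball (0 : Euc d) ρ, g y :=
    integral_congr_ae (ae_of_all _ fun y => abs_of_nonneg (hg0 y))
  have hM : ENNReal.ofReal (ρ ^ α * ⨍ y in ball (0 : Euc d) ρ, |g y|) ≤ fracMaximal d α g 0 :=
    le_iSup₂ (f := fun (ρ : ℝ) (_ : 0 < ρ) =>
      ENNReal.ofReal (ρ ^ α * ⨍ y in ball (0 : Euc d) ρ, |g y|)) ρ hρ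
  calc ∫⁻ y in ball (0 : Euc d) ρ, ENNReal.ofReal (g y)
      = ENNReal.ofReal (∫ y in ball (0 : Euc d) ρ, g y) :=
        (ofReal_integral_eq_lintegral_ofReal hgi.integrableOn (ae_of_all _ hg0)).symm
    _ = ENNReal.ofReal ((volume (ball (0 : Euc d) ρ)).toReal *
          ⨍ y in ball (0 : Euc d) ρ, |g y|) := by
        congr 1
        rw [setAverage_eq, measureReal_def, smul_eq_mul, ← mul_assoc, mul_inv_cancel₀ htne, one_mul, h1]
    _ = volume (ball (0 : Euc d) ρ) * ENNReal.ofReal (⨍ y in ball (0 : Euc d) ρ, |g y|) := by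
        rw [ENNReal.ofReal_mul ENNReal.toReal_nonneg, ENNReal.ofReal_toReal hne]
    _ = (ENNReal.ofReal (ρ ^ d) * volume (ball (0 : Euc d) 1)) *
          (ENNReal.ofReal (ρ ^ (-α)) *
            ENNReal.ofReal (ρ ^ α * ⨍ y in ball (0 : Euc d) ρ, |g y|)) := by
        rw [Measure.addHaar_ball_of_pos volume (0 : Euc d) hρ, finrank_euclideanSpace_fin]
        congr 1
        rw [← ENNReal.ofReal_mul (Real.rpow_nonneg hρ.le _), ← mul_assoc,
          ← Real.rpow_add hρ, neg_add_cancel, Real.rpow_zero, one_mul]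
    _ ≤ (ENNReal.ofReal (ρ ^ d) * volume (ball (0 : Euc d) 1)) *
          (ENNReal.ofReal (ρ ^ (-α)) * fracMaximal d α g 0) := by
        gcongr
    _ = volume (ball (0 : Euc d) 1) * (ENNReal.ofReal (ρ ^ d) * ENNReal.ofReal (ρ ^ (-α))) *
          fracMaximal d α g 0 := by ring
    _ = volume (ball (0 : Euc d) 1) * ENNReal.ofReal (ρ ^ ((d : ℝ) - α)) * fracMaximal d α g 0 := by
        rw [← ENNReal.ofReal_mul (by positivity), ← Real.rpow_natCast ρ d,
          ← Real.rpow_add hρ, sub_eq_add_neg]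

lemma aux_lint (d : ℕ) (α : ℝ) (hα0 : 0 < α) (hαd : α < d)
    (g : Euc d → ℝ) (hgm : Measurable g) (hg0 : ∀ x, 0 ≤ g x) (hgi : Integrable g) :
    ∫⁻ y, ENNReal.ofReal ((ball (0 : Euc d) 2)ᶜ.indicator g y * ‖y‖ ^ (α - (d : ℝ) - 1)) ≤
      (volume (ball (0 : Euc d) 1) * ENNReal.ofReal (2 ^ ((d : ℝ) - α - 1)) *
        (1 - ENNReal.ofReal 2⁻¹)⁻¹) * fracMaximal d α g 0 := by
  set M := fracMaximal d α g 0 with hM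
  set v1 := volume (ball (0 : Euc d) 1) with hv1
  have hrpow : ∀ (n : ℕ) (c : ℝ), ((2 : ℝ) ^ n) ^ c = 2 ^ ((n : ℝ) * c) := by
    intro n c
    rw [← Real.rpow_natCast 2 n, ← Real.rpow_mul (by norm_num)]
  -- annuli
  set A : ℕ → Set (Euc d) := fun k => {y : Euc d | 2 ^ (k + 1) ≤ ‖y‖} ∩ ball 0 (2 ^ (k + 2))
    with hA
  have hcover : (ball (0 : Euc d) 2)ᶜ ⊆ ⋃ k, A k := by
    intro y hy
    have h2 : 2 ≤ ‖y‖ := by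
      simp only [mem_compl_iff, mem_ball_zero_iff, not_lt] at hy
      exact hy
    obtain ⟨n, hn1, hn2⟩ := exists_nat_pow_near (x := ‖y‖ / 2) (y := (2 : ℝ))
      (by linarith) one_lt_two
    refine mem_iUnion.2 ⟨n, ⟨?_, mem_ball_zero_iff.2 ?_⟩⟩
    · show (2 : ℝ) ^ (n + 1) ≤ ‖y‖
      rw [pow_succ]
      linarith
    · show ‖y‖ < (2 : ℝ) ^ (n + 2)
      have : (2 : ℝ) ^ (n + 2) = 2 ^ (n + 1) * 2 := by rw [pow_succ]
      linarith
  -- the integrand is supported on the complement of the ball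
  have hindic : (fun y => ENNReal.ofReal ((ball (0 : Euc d) 2)ᶜ.indicator g y *
      ‖y‖ ^ (α - (d : ℝ) - 1))) =
      ((ball (0 : Euc d) 2)ᶜ).indicator
        (fun y => ENNReal.ofReal (g y * ‖y‖ ^ (α - (d : ℝ) - 1))) := by
    funext y
    by_cases hy : y ∈ (ball (0 : Euc d) 2)ᶜ
    · rw [indicator_of_mem hy, indicator_of_mem hy]
    · rw [indicator_of_notMem hy, indicator_of_notMem hy, zero_mul, ENNReal.ofReal_zero]
  have hterm : ∀ k : ℕ, ∫⁻ y in A k, ENNReal.ofReal (g y * ‖y‖ ^ (α - (d : ℝ) - 1)) ≤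
      (v1 * ENNReal.ofReal (2 ^ ((d : ℝ) - α - 1)) * M) * ENNReal.ofReal 2⁻¹ ^ k := by
    intro k
    have hsub : A k ⊆ ball (0 : Euc d) (2 ^ (k + 2)) := inter_subset_right
    have hstep1 : ∫⁻ y in A k, ENNReal.ofReal (g y * ‖y‖ ^ (α - (d : ℝ) - 1)) ≤
        ENNReal.ofReal (((2 : ℝ) ^ (k + 1)) ^ (α - (d : ℝ) - 1)) *
          ∫⁻ y in A k, ENNReal.ofReal (g y) := by
      rw [← lintegral_const_mul' _ _ ENNReal.ofReal_ne_top]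
      refine setLIntegral_mono (by fun_prop) fun y hy => ?_
      have hy1 : (2 : ℝ) ^ (k + 1) ≤ ‖y‖ := hy.1
      have hrle : ‖y‖ ^ (α - (d : ℝ) - 1) ≤ ((2 : ℝ) ^ (k + 1)) ^ (α - (d : ℝ) - 1) :=
        Real.rpow_le_rpow_of_nonpos (by positivity) hy1 (by push_cast; linarith)
      rw [← ENNReal.ofReal_mul (by positivity)]
      apply ENNReal.ofReal_le_ofReal
      calc g y * ‖y‖ ^ (α - (d : ℝ) - 1) ≤ g y * ((2 : ℝ) ^ (k + 1)) ^ (α - (d : ℝ) - 1) :=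
            mul_le_mul_of_nonneg_left hrle (hg0 y)
        _ = ((2 : ℝ) ^ (k + 1)) ^ (α - (d : ℝ) - 1) * g y := mul_comm _ _
    have hstep2 : ∫⁻ y in A k, ENNReal.ofReal (g y) ≤
        v1 * ENNReal.ofReal (((2 : ℝ) ^ (k + 2)) ^ ((d : ℝ) - α)) * M := by
      refine le_trans (lintegral_mono_set hsub) ?_
      exact aux_ball_bound d α hαd g hg0 hgi _ (by positivity)
    calc ∫⁻ y in A k, ENNReal.ofReal (g y * ‖y‖ ^ (α - (d : ℝ) - 1))
        ≤ ENNReal.ofReal (((2 : ℝ) ^ (k + 1)) ^ (α - (d : ℝ) - 1)) *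
            (v1 * ENNReal.ofReal (((2 : ℝ) ^ (k + 2)) ^ ((d : ℝ) - α)) * M) :=
          le_trans hstep1 (mul_le_mul_right hstep2 _)
      _ = v1 * ENNReal.ofReal (((2 : ℝ) ^ (k + 1)) ^ (α - (d : ℝ) - 1) *
            ((2 : ℝ) ^ (k + 2)) ^ ((d : ℝ) - α)) * M := by
          rw [ENNReal.ofReal_mul (by positivity)]
          ring
      _ = (v1 * ENNReal.ofReal (2 ^ ((d : ℝ) - α - 1)) * M) * ENNReal.ofReal 2⁻¹ ^ k := by
          rw [hrpow, hrpow, ← Real.rpow_add two_pos,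
            show ((k + 1 : ℕ) : ℝ) * (α - (d : ℝ) - 1) + ((k + 2 : ℕ) : ℝ) * ((d : ℝ) - α) =
              ((d : ℝ) - α - 1) + (-(k : ℝ)) by push_cast; ring,
            Real.rpow_add two_pos, Real.rpow_neg (by norm_num : (0:ℝ) ≤ 2),
            Real.rpow_natCast, ← inv_pow, ENNReal.ofReal_mul (by positivity),
            ENNReal.ofReal_pow (by norm_num)]
          ring
  calc ∫⁻ y, ENNReal.ofReal ((ball (0 : Euc d) 2)ᶜ.indicator g y * ‖y‖ ^ (α - (d : ℝ) - 1))
      = ∫⁻ y in (ball (0 : Euc d) 2)ᶜ, ENNReal.ofReal (g y * ‖y‖ ^ (α - (d : ℝ) - 1)) := by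
        rw [hindic, lintegral_indicator measurableSet_ball.compl]
    _ ≤ ∫⁻ y in ⋃ k, A k, ENNReal.ofReal (g y * ‖y‖ ^ (α - (d : ℝ) - 1)) :=
        lintegral_mono_set hcover
    _ ≤ ∑' k, ∫⁻ y in A k, ENNReal.ofReal (g y * ‖y‖ ^ (α - (d : ℝ) - 1)) :=
        lintegral_iUnion_le _ _
    _ ≤ ∑' k, (v1 * ENNReal.ofReal (2 ^ ((d : ℝ) - α - 1)) * M) * ENNReal.ofReal 2⁻¹ ^ k :=
        ENNReal.tsum_le_tsum hterm
    _ = (v1 * ENNReal.ofReal (2 ^ ((d : ℝ) - α - 1)) * M) * (1 - ENNReal.ofReal 2⁻¹)⁻¹ := by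
        rw [ENNReal.tsum_mul_left, ENNReal.tsum_geometric]
    _ = (v1 * ENNReal.ofReal (2 ^ ((d : ℝ) - α - 1)) * (1 - ENNReal.ofReal 2⁻¹)⁻¹) * M := by
        ring

/-- For `h = g·1_{B_2^c}`, the gradient bound `|D(P_α h)(x)| ≤ N M_α g(0)` for `|x| ≤ 1`. -/
theorem grad_riesz_far_part_le (d : ℕ) (hd : 2 ≤ d) (α : ℝ)
    (hα0 : 0 < α) (hαd : α < d) :
    ∃ N : ℝ, 0 < N ∧
      ∀ g : EuclideanSpace ℝ (Fin d) → ℝ,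
        Measurable g → HasCompactSupport g → (∀ x, 0 ≤ g x) →
        (∃ C : ℝ, ∀ x, g x ≤ C) →
        ∀ x : EuclideanSpace ℝ (Fin d), ‖x‖ ≤ 1 →
          ENNReal.ofReal
              ‖fderiv ℝ (rieszPotential d α ((ball (0 : EuclideanSpace ℝ (Fin d)) 2)ᶜ.indicator g)) x‖ ≤
            ENNReal.ofReal N * fracMaximal d α g 0 := by
  set K : ℝ≥0∞ := ENNReal.ofReal (((d : ℝ) - α) * 4 ^ ((d : ℝ) + 1 - α)) *
    (volume (ball (0 : Euc d) 1) * ENNReal.ofReal (2 ^ ((d : ℝ) - α - 1)) *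
      (1 - ENNReal.ofReal 2⁻¹)⁻¹) with hKdef
  have hKtop : K ≠ ⊤ := by
    have h1 : (1 : ℝ≥0∞) - ENNReal.ofReal 2⁻¹ ≠ 0 := by
      rw [← ENNReal.ofReal_one]
      intro hcon
      have := tsub_eq_zero_iff_le.1 hcon
      rw [ENNReal.ofReal_le_ofReal_iff (by norm_num)] at this
      norm_num at this
    rw [hKdef]
    refine ENNReal.mul_ne_top ENNReal.ofReal_ne_top
      (ENNReal.mul_ne_top (ENNReal.mul_ne_top measure_ball_lt_top.ne ENNReal.ofReal_ne_top) ?_)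
    rw [Ne, ENNReal.inv_eq_top]
    exact h1
  refine ⟨K.toReal + 1, by positivity, ?_⟩
  rintro g hgm hgc hg0 ⟨C, hgC⟩ x₀ hx₀
  -- `g` is integrable
  have hgi : Integrable g := by
    refine Integrable.mono' (g := (tsupport g).indicator fun _ => max C 0)
      ?_ hgm.aestronglyMeasurable (ae_of_all _ fun y => ?_)
    · rw [integrable_indicator_iff (isClosed_tsupport g).measurableSet]
      exact integrableOn_const hgc.measure_lt_top.ne
    · rw [Real.norm_eq_abs, abs_of_nonneg (hg0 y)]
      by_cases hy : y ∈ tsupport g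
      · rw [indicator_of_mem hy]
        exact le_max_of_le_left (hgC y)
      · rw [indicator_of_notMem hy, image_eq_zero_of_notMem_tsupport hy]
  set h : Euc d → ℝ := (ball (0 : Euc d) 2)ᶜ.indicator g with hhdef
  have hhm : Measurable h := hgm.indicator measurableSet_ball.compl
  have hh0 : ∀ y, 0 ≤ h y := fun y => Set.indicator_nonneg (fun a _ => hg0 a) y
  have hhle : ∀ y, h y ≤ g y := fun y => Set.indicator_le_self' (fun a _ => hg0 a) y
  have hhi : Integrable h := hgi.indicator measurableSet_ball.compl
  have hhsupp : ∀ y, h y ≠ 0 → 2 ≤ ‖y‖ := by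
    intro y hy
    by_contra hlt
    push_neg at hlt
    exact hy (indicator_of_notMem (by simp [mem_ball_zero_iff]; linarith) g)
  obtain ⟨D, hD, hDle⟩ := aux_deriv d α hα0 hαd h hhm hhi hh0 hhsupp x₀ hx₀
  rw [hD.fderiv]
  have hlint : ∫⁻ y, ENNReal.ofReal (h y * ‖y‖ ^ (α - (d : ℝ) - 1)) ≤
      (volume (ball (0 : Euc d) 1) * ENNReal.ofReal (2 ^ ((d : ℝ) - α - 1)) *
        (1 - ENNReal.ofReal 2⁻¹)⁻¹) * fracMaximal d α g 0 :=
    aux_lint d α hα0 hαd g hgm hg0 hgi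
  calc ENNReal.ofReal ‖D‖
      ≤ ENNReal.ofReal (((d : ℝ) - α) * 4 ^ ((d : ℝ) + 1 - α)) *
          ∫⁻ y, ENNReal.ofReal (h y * ‖y‖ ^ (α - (d : ℝ) - 1)) := hDle
    _ ≤ ENNReal.ofReal (((d : ℝ) - α) * 4 ^ ((d : ℝ) + 1 - α)) *
          ((volume (ball (0 : Euc d) 1) * ENNReal.ofReal (2 ^ ((d : ℝ) - α - 1)) *
            (1 - ENNReal.ofReal 2⁻¹)⁻¹) * fracMaximal d α g 0) :=
        mul_le_mul_right hlint _
    _ = K * fracMaximal d α g 0 := by rw [hKdef]; ring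
    _ ≤ ENNReal.ofReal (K.toReal + 1) * fracMaximal d α g 0 := by
        apply mul_le_mul_left
        conv_lhs => rw [← ENNReal.ofReal_toReal hKtop]
        exact ENNReal.ofReal_le_ofReal (by linarith [ENNReal.toReal_nonneg (a := K)])
end

section
/- Let d ≥ 2, 0 < α < d, and let g : ℝ^d → [0,∞) be bounded, measurable, with compact support. Then there is a constant N = N(d, α) such that ⨍_{B_1} ⨍_{B_1} |P_α g(x) − P_α g(y)| dx dy ≤ N · M_α g(0), where B_1 is the unit ball centered at the origin. -/
open MeasureTheory ENNReal Metric Set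

noncomputable section

namespace RieszAux

lemma finite_lintegral_rpow (d : ℕ) {s : ℝ} (hs0 : s < 0) (hsd : -(d:ℝ) < s)
    {R : ℝ} (hR : 0 < R) :
    ∫⁻ x in ball (0 : EuclideanSpace ℝ (Fin d)) R, ENNReal.ofReal (‖x‖ ^ s) < ∞ := by
  set E := EuclideanSpace ℝ (Fin d)
  have hmeas : Measurable fun x : E => ‖x‖ ^ s := by fun_prop
  have hnn : (0:E → ℝ) ≤ fun x : E => ‖x‖ ^ s := fun x => Real.rpow_nonneg (norm_nonneg _) _
  rw [lintegral_eq_lintegral_meas_le _ (Filter.Eventually.of_forall hnn) hmeas.aemeasurable]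
  set μ := volume.restrict (ball (0:E) R) with hμ
  set T := R ^ s with hT
  have hTpos : 0 < T := Real.rpow_pos_of_pos hR s
  have hsub : ∀ t : ℝ, 0 < t →
      {a : E | t ≤ ‖a‖ ^ s} ⊆ closedBall (0:E) (t ^ s⁻¹) := by
    intro t ht a ha
    simp only [mem_setOf_eq] at ha
    rcases eq_or_ne a 0 with rfl | h0
    · rw [norm_zero, Real.zero_rpow hs0.ne] at ha; linarith
    · have hna : 0 < ‖a‖ := norm_pos_iff.mpr h0
      rw [mem_closedBall_zero_iff]
      exact (Real.le_rpow_inv_iff_of_neg hna ht hs0).mpr ha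
  calc ∫⁻ t in Ioi (0:ℝ), μ {a : E | t ≤ ‖a‖ ^ s}
      ≤ ∫⁻ t in Ioc 0 T ∪ Ioi T, μ {a : E | t ≤ ‖a‖ ^ s} := by
        apply lintegral_mono_set
        intro t ht
        rcases le_or_gt t T with h | h
        · exact Or.inl ⟨ht, h⟩
        · exact Or.inr h
    _ ≤ (∫⁻ t in Ioc 0 T, μ {a : E | t ≤ ‖a‖ ^ s})
        + ∫⁻ t in Ioi T, μ {a : E | t ≤ ‖a‖ ^ s} := lintegral_union_le _ _ _
    _ < ∞ := by
        apply ENNReal.add_lt_top.2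
        constructor
        · calc (∫⁻ t in Ioc 0 T, μ {a : E | t ≤ ‖a‖ ^ s})
              ≤ ∫⁻ _ in Ioc (0:ℝ) T, volume (ball (0:E) R) := by
                apply lintegral_mono
                intro t
                exact (measure_mono (subset_univ _)).trans_eq (Measure.restrict_apply_univ _)
          _ = volume (ball (0:E) R) * volume (Ioc (0:ℝ) T) := by
                rw [setLIntegral_const]
          _ < ∞ := ENNReal.mul_lt_top measure_ball_lt_top (by simp [Real.volume_Ioc])
        · have hb : ∀ t ∈ Ioi T, μ {a : E | t ≤ ‖a‖ ^ s}
              ≤ ENNReal.ofReal (t ^ (s⁻¹ * d)) * volume (ball (0:E) 1) := by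
            intro t ht
            have ht0 : 0 < t := hTpos.trans ht
            calc μ {a : E | t ≤ ‖a‖ ^ s}
                ≤ volume {a : E | t ≤ ‖a‖ ^ s} := Measure.restrict_le_self _
              _ ≤ volume (closedBall (0:E) (t ^ s⁻¹)) := measure_mono (hsub t ht0)
              _ = ENNReal.ofReal ((t ^ s⁻¹) ^ Module.finrank ℝ E) * volume (ball (0:E) 1) :=
                  Measure.addHaar_closedBall _ _ (Real.rpow_nonneg ht0.le _)
              _ = ENNReal.ofReal (t ^ (s⁻¹ * d)) * volume (ball (0:E) 1) := by
                  rw [← Real.rpow_natCast (t ^ s⁻¹) _, ← Real.rpow_mul ht0.le,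
                    show Module.finrank ℝ E = d from finrank_euclideanSpace_fin]
          calc (∫⁻ t in Ioi T, μ {a : E | t ≤ ‖a‖ ^ s})
              ≤ ∫⁻ t in Ioi T, ENNReal.ofReal (t ^ (s⁻¹ * d)) * volume (ball (0:E) 1) :=
                setLIntegral_mono' measurableSet_Ioi hb
            _ = (∫⁻ t in Ioi T, ENNReal.ofReal (t ^ (s⁻¹ * d))) * volume (ball (0:E) 1) := by
                rw [lintegral_mul_const' _ _ measure_ball_lt_top.ne]
            _ < ∞ := by
                apply ENNReal.mul_lt_top _ measure_ball_lt_top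
                apply IntegrableOn.setLIntegral_lt_top
                apply integrableOn_Ioi_rpow_of_lt _ hTpos
                rw [inv_mul_eq_div, div_lt_iff_of_neg hs0]
                linarith

lemma integrableOn_rpow_ball (d : ℕ) {s : ℝ} (hs0 : s < 0) (hsd : -(d:ℝ) < s)
    {R : ℝ} (hR : 0 < R) :
    IntegrableOn (fun x : EuclideanSpace ℝ (Fin d) => ‖x‖ ^ s) (ball 0 R) := by
  constructor
  · exact Measurable.aestronglyMeasurable (by fun_prop)
  · rw [HasFiniteIntegral,
      lintegral_enorm_of_nonneg (fun x => Real.rpow_nonneg (norm_nonneg _) _)]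
    exact finite_lintegral_rpow d hs0 hsd hR

lemma indicator_eq (d : ℕ) (s : ℝ) (x : EuclideanSpace ℝ (Fin d)) (R : ℝ) :
    (ball x R).indicator (fun z => ‖x - z‖ ^ s)
      = fun z => (ball (0:EuclideanSpace ℝ (Fin d)) R).indicator (fun w => ‖w‖ ^ s) (x - z) := by
  ext z
  by_cases hz : z ∈ ball x R
  · rw [indicator_of_mem hz, indicator_of_mem]
    rw [mem_ball_zero_iff]
    rw [mem_ball, dist_eq_norm] at hz
    rwa [← norm_sub_rev] at hz
  · rw [indicator_of_notMem hz, indicator_of_notMem]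
    intro hmem
    apply hz
    rw [mem_ball_zero_iff] at hmem
    rw [mem_ball, dist_eq_norm, ← norm_sub_rev]
    exact hmem

lemma integrableOn_rpow_ball_center (d : ℕ) {s : ℝ} (hs0 : s < 0)
    (hsd : -(d:ℝ) < s) (x : EuclideanSpace ℝ (Fin d)) {R : ℝ} (hR : 0 < R) :
    IntegrableOn (fun z : EuclideanSpace ℝ (Fin d) => ‖x - z‖ ^ s) (ball x R) := by
  have h2 : Integrable (fun z : EuclideanSpace ℝ (Fin d) =>
      (ball (0:EuclideanSpace ℝ (Fin d)) R).indicator (fun w => ‖w‖ ^ s) (x - z)) :=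
    ((integrable_indicator_iff measurableSet_ball).mpr
      (integrableOn_rpow_ball d hs0 hsd hR)).comp_sub_left x
  apply (integrable_indicator_iff measurableSet_ball).mp
  rw [indicator_eq d s x R]
  exact h2

lemma integral_rpow_ball_center (d : ℕ) (s : ℝ) (x : EuclideanSpace ℝ (Fin d)) (R : ℝ) :
    ∫ z in ball x R, ‖x - z‖ ^ s = ∫ w in ball (0 : EuclideanSpace ℝ (Fin d)) R, ‖w‖ ^ s := by
  have h := integral_sub_left_eq_self
    (fun z => (ball (0:EuclideanSpace ℝ (Fin d)) R).indicator (fun w => ‖w‖ ^ s) z)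
    (volume : Measure (EuclideanSpace ℝ (Fin d))) x
  rw [← integral_indicator measurableSet_ball, ← integral_indicator measurableSet_ball, ← h,
    indicator_eq d s x R]

lemma mvt_rpow {s : ℝ} (hs0 : s < 0) {m a b : ℝ} (hm : 0 < m) (ha : m ≤ a) (hb : m ≤ b) :
    |a ^ s - b ^ s| ≤ (-s) * m ^ (s - 1) * |a - b| := by
  have key : ∀ x ∈ Ici m, HasDerivWithinAt (fun t : ℝ => t ^ s)
      (s * x ^ (s - 1)) (Ici m) x := fun x hx =>
    (Real.hasDerivAt_rpow_const (Or.inl (hm.trans_le hx).ne')).hasDerivWithinAt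
  have bound : ∀ x ∈ Ici m, ‖s * x ^ (s - 1)‖ ≤ (-s) * m ^ (s - 1) := by
    intro x hx
    rw [norm_mul, Real.norm_eq_abs, Real.norm_eq_abs, abs_of_neg hs0,
      abs_of_nonneg (Real.rpow_nonneg (hm.le.trans hx) _)]
    apply mul_le_mul_of_nonneg_left _ (by linarith : (0:ℝ) ≤ -s)
    exact Real.rpow_le_rpow_of_nonpos hm hx (by linarith)
  have h := (convex_Ici m).norm_image_sub_le_of_norm_hasDerivWithin_le key bound hb ha
  rw [Real.norm_eq_abs, Real.norm_eq_abs] at h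
  exact h

lemma geom_bound (K : ℕ) : ∑ k ∈ Finset.Ico 2 K, ((2:ℝ)⁻¹)^k ≤ 2 := by
  calc ∑ k ∈ Finset.Ico 2 K, ((2:ℝ)⁻¹)^k ≤ ∑ k ∈ Finset.range K, ((2:ℝ)⁻¹)^k := by
        apply Finset.sum_le_sum_of_subset_of_nonneg
        · intro k hk
          simp only [Finset.mem_Ico] at hk
          exact Finset.mem_range.mpr hk.2
        · intro i _ _
          positivity
    _ ≤ 2 := by
        have := sum_geometric_two_le K
        simpa [one_div] using this

lemma twopow_bound (d : ℕ) (α : ℝ) {s : ℝ} (hs : s = α - d) (hα0 : 0 < α) (k : ℕ) (hk : 1 ≤ k) :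
    ((2:ℝ)^(k-1)) ^ (s - 1) * (((2:ℝ)^(k+1))^d * ((((2:ℝ)^(k+1)) ^ α)⁻¹)) ≤
      2^(2*d+1) * ((2:ℝ)⁻¹)^k := by
  subst hs
  have h2 : (0:ℝ) < 2 := two_pos
  have e1 : ((2:ℝ)^(k-1)) ^ (α - d - 1) = (2:ℝ) ^ (((k-1:ℕ):ℝ) * (α - d - 1)) := by
    rw [← Real.rpow_natCast (2:ℝ) (k-1), ← Real.rpow_mul h2.le]
  have e2 : (((2:ℝ)^(k+1))^d : ℝ) = (2:ℝ) ^ (((k+1:ℕ):ℝ) * d) := by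
    rw [← Real.rpow_natCast (2:ℝ) (k+1), ← Real.rpow_natCast ((2:ℝ) ^ ((k+1:ℕ):ℝ)) d,
      ← Real.rpow_mul h2.le]
  have e3 : ((((2:ℝ)^(k+1)) ^ α)⁻¹ : ℝ) = (2:ℝ) ^ (-(((k+1:ℕ):ℝ) * α)) := by
    rw [← Real.rpow_natCast (2:ℝ) (k+1), ← Real.rpow_mul h2.le, ← Real.rpow_neg h2.le]
  have e4 : ((2:ℝ)^(2*d+1) : ℝ) = (2:ℝ) ^ (((2*d+1:ℕ):ℝ)) := by
    rw [← Real.rpow_natCast (2:ℝ) (2*d+1)]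
  have e5 : (((2:ℝ)⁻¹)^k : ℝ) = (2:ℝ) ^ (-(k:ℝ)) := by
    rw [← Real.rpow_neg_one, ← Real.rpow_natCast ((2:ℝ) ^ (-1:ℝ)) k, ← Real.rpow_mul h2.le]
    norm_num
  rw [e1, e2, e3, e4, e5, ← Real.rpow_add h2, ← Real.rpow_add h2, ← Real.rpow_add h2]
  apply Real.rpow_le_rpow_of_exponent_le one_le_two
  have hc : ((k-1:ℕ):ℝ) = (k:ℝ) - 1 := by
    rw [Nat.cast_sub hk]; norm_num
  rw [hc]
  push_cast
  nlinarith [hα0]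


end RieszAux

namespace RieszAux

set_option maxHeartbeats 2000000 in
lemma main_real (d : ℕ) (hd : 2 ≤ d) (α : ℝ) (hα0 : 0 < α) (hαd : α < d) :
    ∃ N : ℝ, 0 < N ∧
      ∀ g : EuclideanSpace ℝ (Fin d) → ℝ,
        Measurable g → HasCompactSupport g → (∀ x, 0 ≤ g x) → (∃ C : ℝ, ∀ x, g x ≤ C) →
        ∀ M : ℝ, 0 ≤ M →
        (∀ ρ : ℝ, 0 < ρ → ρ ^ α * ⨍ y in ball (0:EuclideanSpace ℝ (Fin d)) ρ, g y ≤ M) →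
        ⨍ x in ball (0 : EuclideanSpace ℝ (Fin d)) 1,
          ⨍ y in ball (0 : EuclideanSpace ℝ (Fin d)) 1,
            |rieszPotential d α g x - rieszPotential d α g y| ≤ N * M := by
  have hd0 : 0 < d := by omega
  haveI : Nontrivial (EuclideanSpace ℝ (Fin d)) := by
    apply Module.nontrivial_of_finrank_pos (R := ℝ) (M := EuclideanSpace ℝ (Fin d))
    rw [finrank_euclideanSpace_fin]
    exact hd0
  set s : ℝ := α - d with hs_def
  have hs0 : s < 0 := by rw [hs_def]; linarith
  have hsd : -(d:ℝ) < s := by rw [hs_def]; linarith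
  set vB1 : ℝ := (volume (ball (0:EuclideanSpace ℝ (Fin d)) 1)).toReal with hvB1_def
  have hvB1 : 0 < vB1 :=
    ENNReal.toReal_pos (measure_ball_pos volume 0 one_pos).ne' measure_ball_lt_top.ne
  set κ2 : ℝ := ∫ w in ball (0:EuclideanSpace ℝ (Fin d)) 2, ‖w‖ ^ s with hκ2_def
  set κ5 : ℝ := ∫ w in ball (0:EuclideanSpace ℝ (Fin d)) 5, ‖w‖ ^ s with hκ5_def
  have hκ2nn : 0 ≤ κ2 := integral_nonneg fun w => Real.rpow_nonneg (norm_nonneg _) _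
  set Cnear : ℝ := κ2 + 2 ^ s * vB1 with hCnear_def
  have hCnearnn : 0 ≤ Cnear :=
    add_nonneg hκ2nn (mul_nonneg (Real.rpow_nonneg two_pos.le _) hvB1.le)
  set N' : ℝ := 2 * (Cnear * ((4:ℝ)^d * ((4:ℝ) ^ α)⁻¹))
      + (2 * ((d:ℝ) - α)) * (vB1 * (2^(2*d+1) * 2)) with hN'_def
  have hN'nn : 0 ≤ N' := by
    apply add_nonneg
    · apply mul_nonneg (by norm_num)
      apply mul_nonneg hCnearnn
      positivity
    · apply mul_nonneg (by nlinarith)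
      positivity
  refine ⟨N' + 1, by linarith, ?_⟩
  intro g hgm hgc hg0 hCex M hM0 hM
  obtain ⟨C0, hC0⟩ := hCex
  have hC0nn : 0 ≤ C0 := le_trans (hg0 0) (hC0 0)
  -- support
  obtain ⟨r, hr⟩ := hgc.isBounded.subset_ball (0 : EuclideanSpace ℝ (Fin d))
  obtain ⟨K0, hK0⟩ := pow_unbounded_of_one_lt r (one_lt_two (α := ℝ))
  set K := max K0 2 with hK_def
  have hK2 : 2 ≤ K := le_max_right _ _
  have hsupp : tsupport g ⊆ ball (0:EuclideanSpace ℝ (Fin d)) ((2:ℝ)^K) := by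
    apply hr.trans
    apply ball_subset_ball
    calc r ≤ (2:ℝ)^K0 := hK0.le
      _ ≤ (2:ℝ)^K := by
        apply pow_le_pow_right₀ one_le_two (le_max_left _ _)
  have hgz : ∀ z, z ∉ ball (0:EuclideanSpace ℝ (Fin d)) ((2:ℝ)^K) → g z = 0 := fun z hz =>
    image_eq_zero_of_notMem_tsupport (fun h => hz (hsupp h))
  have hgInt : Integrable g := by
    have hIO : IntegrableOn g (ball (0:EuclideanSpace ℝ (Fin d)) ((2:ℝ)^K)) :=
      Measure.integrableOn_of_bounded measure_ball_lt_top.ne hgm.aestronglyMeasurable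
        (ae_of_all _ fun z => by
          rw [Real.norm_eq_abs, abs_of_nonneg (hg0 z)]; exact hC0 z)
    apply ((integrable_indicator_iff measurableSet_ball).mpr hIO).congr
    apply ae_of_all
    intro z
    by_cases hz : z ∈ ball (0:EuclideanSpace ℝ (Fin d)) ((2:ℝ)^K)
    · rw [indicator_of_mem hz]
    · rw [indicator_of_notMem hz, hgz z hz]
  -- key maximal-function bound
  have key : ∀ ρ : ℝ, 0 < ρ →
      ∫ z in ball (0:EuclideanSpace ℝ (Fin d)) ρ, g z ≤ vB1 * (ρ ^ d * ((ρ ^ α)⁻¹ * M)) := by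
    intro ρ hρ
    have havg := hM ρ hρ
    have hvol : (volume (ball (0:EuclideanSpace ℝ (Fin d)) ρ)).toReal = ρ ^ d * vB1 := by
      rw [Measure.addHaar_ball _ _ hρ.le, finrank_euclideanSpace_fin, ENNReal.toReal_mul,
        ENNReal.toReal_ofReal (by positivity)]
    have hρα : (0:ℝ) < ρ ^ α := Real.rpow_pos_of_pos hρ _
    have havg' : ⨍ y in ball (0:EuclideanSpace ℝ (Fin d)) ρ, g y ≤ (ρ ^ α)⁻¹ * M := by
      rw [inv_mul_eq_div, le_div_iff₀ hρα, mul_comm]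
      exact havg
    have hrw : ∫ z in ball (0:EuclideanSpace ℝ (Fin d)) ρ, g z
        = (ρ ^ d * vB1) * ⨍ y in ball (0:EuclideanSpace ℝ (Fin d)) ρ, g y := by
      rw [setAverage_eq, smul_eq_mul, measureReal_def, hvol, ← mul_assoc, mul_inv_cancel₀ (by positivity), one_mul]
    rw [hrw]
    calc (ρ ^ d * vB1) * ⨍ y in ball (0:EuclideanSpace ℝ (Fin d)) ρ, g y
        ≤ (ρ ^ d * vB1) * ((ρ ^ α)⁻¹ * M) :=
          mul_le_mul_of_nonneg_left havg' (by positivity)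
      _ = vB1 * (ρ ^ d * ((ρ ^ α)⁻¹ * M)) := by ring
  -- kernel integrability
  have hker : ∀ (x : EuclideanSpace ℝ (Fin d)) {R : ℝ}, 0 < R →
      IntegrableOn (fun z => ‖x - z‖ ^ s) (ball x R) := fun x {R} hR =>
    integrableOn_rpow_ball_center d hs0 hsd x hR
  have hfull : ∀ x : EuclideanSpace ℝ (Fin d), Integrable (fun z => g z * ‖x - z‖ ^ s) := by
    intro x
    set R := ‖x‖ + 2^K + 1 with hR
    have hRpos : 0 < R := by positivity
    have hout : ∀ z, z ∉ ball x R → g z = 0 := by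
      intro z hz
      apply hgz
      intro hz2
      apply hz
      rw [mem_ball, dist_eq_norm]
      rw [mem_ball_zero_iff] at hz2
      calc ‖z - x‖ ≤ ‖z‖ + ‖x‖ := norm_sub_le _ _
        _ < 2^K + ‖x‖ + 1 := by linarith
        _ = R := by rw [hR]; ring
    apply Integrable.mono'
      (g := fun z => C0 * (ball x R).indicator (fun z => ‖x - z‖^s) z)
    · exact (((integrable_indicator_iff measurableSet_ball).mpr (hker x hRpos))).const_mul C0
    · exact (hgm.mul (by fun_prop)).aestronglyMeasurable
    · apply ae_of_all
      intro z
      rw [Real.norm_eq_abs,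
        abs_of_nonneg (mul_nonneg (hg0 z) (Real.rpow_nonneg (norm_nonneg _) _))]
      by_cases hz : z ∈ ball x R
      · rw [indicator_of_mem hz]
        exact mul_le_mul_of_nonneg_right (hC0 z) (Real.rpow_nonneg (norm_nonneg _) _)
      · rw [indicator_of_notMem hz, hout z hz, zero_mul, mul_zero]
  -- rewrite the Riesz potential
  have hPg : ∀ x : EuclideanSpace ℝ (Fin d),
      rieszPotential d α g x = ∫ z, g z * ‖x - z‖ ^ s := by
    intro x
    rw [rieszPotential]
    congr 1
    ext z
    rw [div_eq_mul_inv, ← Real.rpow_neg (norm_nonneg _), neg_sub, ← hs_def]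
  set B4 := ball (0:EuclideanSpace ℝ (Fin d)) 4 with hB4
  have hcompl4 : ∀ z : EuclideanSpace ℝ (Fin d), z ∈ B4ᶜ → (4:ℝ) ≤ ‖z‖ := by
    intro z hz
    have hz' : z ∉ ball (0:EuclideanSpace ℝ (Fin d)) 4 := hz
    rwa [mem_ball_zero_iff, not_lt] at hz'
  set Afun : EuclideanSpace ℝ (Fin d) → ℝ := fun x => ∫ z in B4, g z * ‖x - z‖ ^ s with hAfun
  set Bfun : EuclideanSpace ℝ (Fin d) → ℝ := fun x => ∫ z in B4ᶜ, g z * ‖x - z‖ ^ s with hBfun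
  have hsplit : ∀ x, rieszPotential d α g x = Afun x + Bfun x := by
    intro x
    rw [hPg x, ← integral_add_compl measurableSet_ball (hfull x)]
  have hAnn : ∀ x, 0 ≤ Afun x := fun x =>
    integral_nonneg fun z => mul_nonneg (hg0 z) (Real.rpow_nonneg (norm_nonneg _) _)
  have hB4sub : ∀ x ∈ ball (0:EuclideanSpace ℝ (Fin d)) 1, B4 ⊆ ball x 5 := by
    intro x hx z hz
    rw [mem_ball, dist_eq_norm]
    rw [hB4, mem_ball_zero_iff] at hz
    rw [mem_ball_zero_iff] at hx
    calc ‖z - x‖ ≤ ‖z‖ + ‖x‖ := norm_sub_le _ _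
      _ < 5 := by linarith
  have hA_bound : ∀ x ∈ ball (0:EuclideanSpace ℝ (Fin d)) 1, Afun x ≤ C0 * κ5 := by
    intro x hx
    have h5 : IntegrableOn (fun z => ‖x - z‖ ^ s) (ball x 5) := hker x (by norm_num)
    calc Afun x ≤ ∫ z in B4, C0 * ‖x - z‖ ^ s := by
          apply setIntegral_mono_on ((hfull x).integrableOn)
            ((h5.mono_set (hB4sub x hx)).const_mul C0) measurableSet_ball
          intro z _
          exact mul_le_mul_of_nonneg_right (hC0 z) (Real.rpow_nonneg (norm_nonneg _) _)
      _ = C0 * ∫ z in B4, ‖x - z‖ ^ s := integral_const_mul _ _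
      _ ≤ C0 * ∫ z in ball x 5, ‖x - z‖ ^ s := by
          apply mul_le_mul_of_nonneg_left _ hC0nn
          exact setIntegral_mono_set h5
            (ae_of_all _ fun z => Real.rpow_nonneg (norm_nonneg _) _)
            (HasSubset.Subset.eventuallyLE (hB4sub x hx))
      _ = C0 * κ5 := by rw [integral_rpow_ball_center d s x 5, ← hκ5_def]
  have hFmeas : Measurable (fun p : EuclideanSpace ℝ (Fin d) × EuclideanSpace ℝ (Fin d) =>
      g p.2 * ‖p.1 - p.2‖ ^ s) := by
    apply Measurable.mul (hgm.comp measurable_snd)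
    fun_prop
  have hAmeas : StronglyMeasurable Afun :=
    hFmeas.stronglyMeasurable.integral_prod_right'
  have hAint : IntegrableOn Afun (ball (0:EuclideanSpace ℝ (Fin d)) 1) := by
    apply Measure.integrableOn_of_bounded measure_ball_lt_top.ne hAmeas.aestronglyMeasurable
    filter_upwards [ae_restrict_mem measurableSet_ball] with x hx
    rw [Real.norm_eq_abs, abs_of_nonneg (hAnn x)]
    exact hA_bound x hx
  -- the h-bound
  have hkerx : ∀ z : EuclideanSpace ℝ (Fin d),
      IntegrableOn (fun x : EuclideanSpace ℝ (Fin d) => ‖x - z‖ ^ s)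
        (ball (0:EuclideanSpace ℝ (Fin d)) 1) := by
    intro z
    have h1 : IntegrableOn (fun x => ‖z - x‖ ^ s) (ball z (‖z‖ + 2)) := hker z (by positivity)
    have h2 : IntegrableOn (fun x : EuclideanSpace ℝ (Fin d) => ‖x - z‖ ^ s)
        (ball z (‖z‖ + 2)) := by
      apply h1.congr_fun _ measurableSet_ball
      intro x _
      show ‖z - x‖ ^ s = ‖x - z‖ ^ s
      rw [norm_sub_rev]
    apply h2.mono_set
    intro x hx
    rw [mem_ball_zero_iff] at hx
    rw [mem_ball, dist_eq_norm]
    calc ‖x - z‖ ≤ ‖x‖ + ‖z‖ := norm_sub_le _ _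
      _ < ‖z‖ + 2 := by linarith
  have hz_bound : ∀ z : EuclideanSpace ℝ (Fin d),
      ∫ x in ball (0:EuclideanSpace ℝ (Fin d)) 1, ‖x - z‖ ^ s ≤ Cnear := by
    intro z
    have hsplit2 : ∫ x in ball (0:EuclideanSpace ℝ (Fin d)) 1, ‖x - z‖ ^ s
        = (∫ x in ball (0:EuclideanSpace ℝ (Fin d)) 1 ∩ ball z 2, ‖x - z‖ ^ s)
          + ∫ x in ball (0:EuclideanSpace ℝ (Fin d)) 1 \ ball z 2, ‖x - z‖ ^ s :=
      (integral_inter_add_diff measurableSet_ball (hkerx z)).symm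
    have hint2 : IntegrableOn (fun x : EuclideanSpace ℝ (Fin d) => ‖x - z‖ ^ s) (ball z 2) := by
      apply (hker z (by norm_num : (0:ℝ) < 2)).congr_fun _ measurableSet_ball
      intro x _
      show ‖z - x‖ ^ s = ‖x - z‖ ^ s
      rw [norm_sub_rev]
    have hval : ∫ x in ball z 2, ‖x - z‖ ^ s = κ2 := by
      rw [hκ2_def, ← integral_rpow_ball_center d s z 2]
      apply setIntegral_congr_fun measurableSet_ball
      intro x _
      show ‖x - z‖ ^ s = ‖z - x‖ ^ s
      rw [norm_sub_rev]
    have hpart1 : (∫ x in ball (0:EuclideanSpace ℝ (Fin d)) 1 ∩ ball z 2, ‖x - z‖ ^ s) ≤ κ2 := by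
      calc (∫ x in ball (0:EuclideanSpace ℝ (Fin d)) 1 ∩ ball z 2, ‖x - z‖ ^ s)
          ≤ ∫ x in ball z 2, ‖x - z‖ ^ s :=
            setIntegral_mono_set hint2
              (ae_of_all _ fun x => Real.rpow_nonneg (norm_nonneg _) _)
              (HasSubset.Subset.eventuallyLE inter_subset_right)
        _ = κ2 := hval
    have hpart2 : ∫ x in ball (0:EuclideanSpace ℝ (Fin d)) 1 \ ball z 2, ‖x - z‖ ^ s
        ≤ 2 ^ s * vB1 := by
      have hmeasset : MeasurableSet (ball (0:EuclideanSpace ℝ (Fin d)) 1 \ ball z 2) :=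
        measurableSet_ball.diff measurableSet_ball
      calc ∫ x in ball (0:EuclideanSpace ℝ (Fin d)) 1 \ ball z 2, ‖x - z‖ ^ s
          ≤ ∫ _ in ball (0:EuclideanSpace ℝ (Fin d)) 1 \ ball z 2, (2:ℝ) ^ s := by
            apply setIntegral_mono_on ((hkerx z).mono_set diff_subset)
              (integrableOn_const ((measure_mono diff_subset).trans_lt
                measure_ball_lt_top).ne) hmeasset
            intro x hx
            apply Real.rpow_le_rpow_of_nonpos (by norm_num) _ hs0.le
            have h2x := hx.2
            rw [mem_ball, dist_eq_norm, not_lt] at h2x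
            exact h2x
        _ = (volume (ball (0:EuclideanSpace ℝ (Fin d)) 1 \ ball z 2)).toReal * 2 ^ s := by
            rw [setIntegral_const, smul_eq_mul, measureReal_def]
        _ ≤ vB1 * 2 ^ s := by
            apply mul_le_mul_of_nonneg_right _ (Real.rpow_nonneg two_pos.le _)
            rw [hvB1_def]
            exact ENNReal.toReal_mono measure_ball_lt_top.ne (measure_mono diff_subset)
        _ = 2 ^ s * vB1 := mul_comm _ _
    rw [hsplit2, hCnear_def]
    linarith
  -- Fubini for the near part
  have hprod : Integrable (fun p : EuclideanSpace ℝ (Fin d) × EuclideanSpace ℝ (Fin d) =>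
      g p.2 * ‖p.1 - p.2‖ ^ s)
      ((volume.restrict (ball (0:EuclideanSpace ℝ (Fin d)) 1)).prod (volume.restrict B4)) := by
    rw [integrable_prod_iff (hFmeas.aestronglyMeasurable)]
    constructor
    · apply ae_of_all
      intro x
      exact (hfull x).integrableOn
    · have heq : (fun x : EuclideanSpace ℝ (Fin d) => ∫ z in B4, ‖g z * ‖x - z‖ ^ s‖) = Afun := by
        funext x
        apply setIntegral_congr_fun measurableSet_ball
        intro z _
        show ‖g z * ‖x - z‖ ^ s‖ = g z * ‖x - z‖ ^ s
        rw [Real.norm_eq_abs,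
          abs_of_nonneg (mul_nonneg (hg0 z) (Real.rpow_nonneg (norm_nonneg _) _))]
      rw [heq]
      exact hAint
  have hnear : ∫ x in ball (0:EuclideanSpace ℝ (Fin d)) 1, Afun x
      ≤ Cnear * (vB1 * ((4:ℝ) ^ d * (((4:ℝ) ^ α)⁻¹ * M))) := by
    have hswap := integral_integral_swap
      (f := fun (x : EuclideanSpace ℝ (Fin d)) (z : EuclideanSpace ℝ (Fin d)) =>
        g z * ‖x - z‖ ^ s) hprod
    calc ∫ x in ball (0:EuclideanSpace ℝ (Fin d)) 1, Afun x
        = ∫ z in B4, ∫ x in ball (0:EuclideanSpace ℝ (Fin d)) 1, g z * ‖x - z‖ ^ s := hswap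
      _ ≤ ∫ z in B4, Cnear * g z := by
          apply integral_mono_of_nonneg
          · apply ae_of_all
            intro z
            exact integral_nonneg fun x =>
              mul_nonneg (hg0 z) (Real.rpow_nonneg (norm_nonneg _) _)
          · exact (hgInt.integrableOn).const_mul Cnear
          · apply ae_of_all
            intro z
            show (∫ x in ball (0:EuclideanSpace ℝ (Fin d)) 1, g z * ‖x - z‖ ^ s) ≤ Cnear * g z
            rw [integral_const_mul]
            calc g z * ∫ x in ball (0:EuclideanSpace ℝ (Fin d)) 1, ‖x - z‖ ^ s
                ≤ g z * Cnear := mul_le_mul_of_nonneg_left (hz_bound z) (hg0 z)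
              _ = Cnear * g z := mul_comm _ _
      _ = Cnear * ∫ z in B4, g z := integral_const_mul _ _
      _ ≤ Cnear * (vB1 * ((4:ℝ) ^ d * (((4:ℝ) ^ α)⁻¹ * M))) := by
          apply mul_le_mul_of_nonneg_left _ hCnearnn
          exact key 4 (by norm_num)
  -- the tail
  set w : EuclideanSpace ℝ (Fin d) → ℝ := fun z => (‖z‖ - 1) ^ (s - 1) with hw
  have hwmeas : Measurable w := by fun_prop
  have hGW_int : IntegrableOn (fun z => g z * w z) B4ᶜ := by
    apply Integrable.mono'
      (g := fun z => (C0 * 3 ^ (s-1)) *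
        (ball (0:EuclideanSpace ℝ (Fin d)) ((2:ℝ)^K)).indicator (fun _ => (1:ℝ)) z)
    · exact (((integrable_indicator_iff measurableSet_ball).mpr
        (integrableOn_const measure_ball_lt_top.ne)).const_mul _).restrict
    · exact ((hgm.mul hwmeas).aestronglyMeasurable).restrict
    · filter_upwards [ae_restrict_mem measurableSet_ball.compl] with z hz
      have h4 : (4:ℝ) ≤ ‖z‖ := hcompl4 z hz
      have hwnn : 0 ≤ w z := Real.rpow_nonneg (by linarith) _
      have hwle : w z ≤ 3 ^ (s-1) := by
        apply Real.rpow_le_rpow_of_nonpos (by norm_num) (by linarith) (by linarith)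
      rw [Real.norm_eq_abs, abs_of_nonneg (mul_nonneg (hg0 z) hwnn)]
      by_cases hzK : z ∈ ball (0:EuclideanSpace ℝ (Fin d)) ((2:ℝ)^K)
      · rw [indicator_of_mem hzK, mul_one]
        exact mul_le_mul (hC0 z) hwle hwnn hC0nn
      · rw [indicator_of_notMem hzK, hgz z hzK, zero_mul, mul_zero]
  set Tint : ℝ := ∫ z in B4ᶜ, g z * w z with hTint_def
  have hTint_nn : 0 ≤ Tint := by
    rw [hTint_def]
    apply integral_nonneg_of_ae
    filter_upwards [ae_restrict_mem measurableSet_ball.compl] with z hz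
    have h4 : (4:ℝ) ≤ ‖z‖ := hcompl4 z hz
    exact mul_nonneg (hg0 z) (Real.rpow_nonneg (by linarith) _)
  set ann : ℕ → Set (EuclideanSpace ℝ (Fin d)) := fun k =>
    ball (0:EuclideanSpace ℝ (Fin d)) ((2:ℝ)^(k+1)) \ ball (0:EuclideanSpace ℝ (Fin d)) ((2:ℝ)^k)
    with hann
  have hann_meas : ∀ k, MeasurableSet (ann k) := fun k =>
    measurableSet_ball.diff measurableSet_ball
  have hann_sub : ∀ k, 2 ≤ k → ann k ⊆ B4ᶜ := by
    intro k hk z hz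
    rw [hann] at hz
    have h1 : (2:ℝ)^k ≤ ‖z‖ := by
      have := hz.2
      rw [mem_ball_zero_iff, not_lt] at this
      exact this
    have h2 : (4:ℝ) ≤ (2:ℝ)^k := by
      calc (4:ℝ) = 2^2 := by norm_num
        _ ≤ 2^k := pow_le_pow_right₀ one_le_two hk
    rw [mem_compl_iff, hB4, mem_ball_zero_iff, not_lt]
    linarith
  have hann_est : ∀ k ∈ Finset.Ico 2 K,
      ∫ z in ann k, g z * w z ≤ vB1 * M * (2^(2*d+1) * ((2:ℝ)⁻¹)^k) := by
    intro k hk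
    obtain ⟨hk2, hkK⟩ := Finset.mem_Ico.mp hk
    have hk1 : 1 ≤ k := by omega
    have hwk : ∀ z ∈ ann k, w z ≤ ((2:ℝ)^(k-1))^(s-1) := by
      intro z hz
      rw [hann] at hz
      have h1 : (2:ℝ)^k ≤ ‖z‖ := by
        have := hz.2
        rw [mem_ball_zero_iff, not_lt] at this
        exact this
      have hkk : (2:ℝ)^k = 2^(k-1) * 2 := by
        rw [← pow_succ]
        congr 1
        omega
      have h2 : (1:ℝ) ≤ 2^(k-1) := one_le_pow₀ one_le_two
      apply Real.rpow_le_rpow_of_nonpos (by positivity) _ (by linarith)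
      rw [hkk] at h1
      linarith
    calc ∫ z in ann k, g z * w z
        ≤ ∫ z in ann k, ((2:ℝ)^(k-1))^(s-1) * g z := by
          apply integral_mono_of_nonneg
          · filter_upwards [ae_restrict_mem (hann_meas k)] with z hz
            have h4 : (4:ℝ) ≤ ‖z‖ := hcompl4 z (hann_sub k hk2 hz)
            exact mul_nonneg (hg0 z) (Real.rpow_nonneg (by linarith) _)
          · exact (hgInt.integrableOn).const_mul _
          · filter_upwards [ae_restrict_mem (hann_meas k)] with z hz
            calc g z * w z ≤ g z * ((2:ℝ)^(k-1))^(s-1) :=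
                mul_le_mul_of_nonneg_left (hwk z hz) (hg0 z)
              _ = ((2:ℝ)^(k-1))^(s-1) * g z := mul_comm _ _
      _ = ((2:ℝ)^(k-1))^(s-1) * ∫ z in ann k, g z := integral_const_mul _ _
      _ ≤ ((2:ℝ)^(k-1))^(s-1) *
            ∫ z in ball (0:EuclideanSpace ℝ (Fin d)) ((2:ℝ)^(k+1)), g z := by
          apply mul_le_mul_of_nonneg_left _ (Real.rpow_nonneg (by positivity) _)
          apply setIntegral_mono_set hgInt.integrableOn (ae_of_all _ hg0)
          exact HasSubset.Subset.eventuallyLE (by rw [hann]; exact diff_subset)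
      _ ≤ ((2:ℝ)^(k-1))^(s-1) *
            (vB1 * (((2:ℝ)^(k+1)) ^ d * ((((2:ℝ)^(k+1)) ^ α)⁻¹ * M))) := by
          apply mul_le_mul_of_nonneg_left (key _ (by positivity))
            (Real.rpow_nonneg (by positivity) _)
      _ ≤ vB1 * M * (2^(2*d+1) * ((2:ℝ)⁻¹)^k) := by
          have h2b := twopow_bound d α hs_def hα0 k hk1
          calc ((2:ℝ)^(k-1))^(s-1) *
                (vB1 * (((2:ℝ)^(k+1)) ^ d * ((((2:ℝ)^(k+1)) ^ α)⁻¹ * M)))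
              = (vB1 * M) * (((2:ℝ)^(k-1))^(s-1) *
                (((2:ℝ)^(k+1)) ^ d * (((2:ℝ)^(k+1)) ^ α)⁻¹)) := by ring
            _ ≤ (vB1 * M) * (2^(2*d+1) * ((2:ℝ)⁻¹)^k) :=
                mul_le_mul_of_nonneg_left h2b (mul_nonneg hvB1.le hM0)
            _ = vB1 * M * (2^(2*d+1) * ((2:ℝ)⁻¹)^k) := by ring
  have hsubU : B4ᶜ ∩ ball (0:EuclideanSpace ℝ (Fin d)) ((2:ℝ)^K)
      ⊆ ⋃ k ∈ Finset.Ico 2 K, ann k := by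
    rintro z ⟨hz4, hzK⟩
    have h4 : (4:ℝ) ≤ ‖z‖ := hcompl4 z hz4
    have hK' : ‖z‖ < (2:ℝ)^K := mem_ball_zero_iff.mp hzK
    set n := ⌊‖z‖⌋₊ with hn
    have hn4 : 4 ≤ n := Nat.le_floor (by exact_mod_cast h4)
    have hn0 : n ≠ 0 := by omega
    set k := Nat.log 2 n with hkdef
    have h1 : 2^k ≤ n := Nat.pow_log_le_self 2 hn0
    have h2 : n < 2^(k+1) := Nat.lt_pow_succ_log_self one_lt_two n
    have hk2 : 2 ≤ k := (Nat.le_log_iff_pow_le one_lt_two hn0).mpr (by omega)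
    have hnz : (n:ℝ) ≤ ‖z‖ := Nat.floor_le (norm_nonneg z)
    have hzn : ‖z‖ < (n:ℝ) + 1 := Nat.lt_floor_add_one _
    have hlow : (2:ℝ)^k ≤ ‖z‖ := by
      calc (2:ℝ)^k = ((2^k : ℕ) : ℝ) := by push_cast; ring
        _ ≤ (n:ℝ) := by exact_mod_cast h1
        _ ≤ ‖z‖ := hnz
    have hhigh : ‖z‖ < (2:ℝ)^(k+1) := by
      have hcast : (n:ℝ) + 1 ≤ (2:ℝ)^(k+1) := by
        have : (n + 1 : ℕ) ≤ 2^(k+1) := h2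
        calc (n:ℝ) + 1 = ((n+1 : ℕ) : ℝ) := by push_cast; ring
          _ ≤ ((2^(k+1) : ℕ) : ℝ) := by exact_mod_cast this
          _ = (2:ℝ)^(k+1) := by push_cast; ring
      linarith
    have hkK : k < K := by
      by_contra hcon
      push_neg at hcon
      have : (2:ℝ)^K ≤ (2:ℝ)^k := pow_le_pow_right₀ one_le_two hcon
      linarith
    apply mem_biUnion (Finset.mem_Ico.mpr ⟨hk2, hkK⟩)
    rw [hann]
    exact ⟨mem_ball_zero_iff.mpr hhigh, fun hc => absurd (mem_ball_zero_iff.mp hc)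
      (not_lt.mpr hlow)⟩
  have hTint_le : Tint ≤ vB1 * M * (2^(2*d+1) * 2) := by
    have hsplitT : Tint = (∫ z in B4ᶜ ∩ ball (0:EuclideanSpace ℝ (Fin d)) ((2:ℝ)^K), g z * w z)
        + ∫ z in B4ᶜ \ ball (0:EuclideanSpace ℝ (Fin d)) ((2:ℝ)^K), g z * w z := by
      rw [hTint_def, ← integral_inter_add_diff measurableSet_ball hGW_int]
    have hzero : ∫ z in B4ᶜ \ ball (0:EuclideanSpace ℝ (Fin d)) ((2:ℝ)^K), g z * w z = 0 := by
      apply setIntegral_eq_zero_of_forall_eq_zero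
      intro z hz
      rw [hgz z hz.2, zero_mul]
    have humeasU : MeasurableSet (⋃ k ∈ Finset.Ico 2 K, ann k) :=
      MeasurableSet.biUnion (Finset.Ico 2 K).countable_toSet (fun k _ => hann_meas k)
    have hUsub : (⋃ k ∈ Finset.Ico 2 K, ann k) ⊆ B4ᶜ := by
      intro z hz
      simp only [mem_iUnion, exists_prop] at hz
      obtain ⟨k, hk, hzk⟩ := hz
      exact hann_sub k (Finset.mem_Ico.mp hk).1 hzk
    have hU : ∫ z in B4ᶜ ∩ ball (0:EuclideanSpace ℝ (Fin d)) ((2:ℝ)^K), g z * w z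
        ≤ ∫ z in ⋃ k ∈ Finset.Ico 2 K, ann k, g z * w z := by
      apply setIntegral_mono_set (hGW_int.mono_set hUsub)
      · filter_upwards [ae_restrict_mem humeasU] with z hz
        have h4 : (4:ℝ) ≤ ‖z‖ := hcompl4 z (hUsub hz)
        exact mul_nonneg (hg0 z) (Real.rpow_nonneg (by linarith) _)
      · exact HasSubset.Subset.eventuallyLE hsubU
    have hsum : ∫ z in ⋃ k ∈ Finset.Ico 2 K, ann k, g z * w z
        = ∑ k ∈ Finset.Ico 2 K, ∫ z in ann k, g z * w z := by
      apply integral_biUnion_finset _ (fun k _ => hann_meas k)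
      · intro i _ j _ hij
        rcases hij.lt_or_gt with h | h
        · apply Set.disjoint_left.mpr
          intro z hzi hzj
          rw [hann] at hzi hzj
          have h1 : ‖z‖ < (2:ℝ)^(i+1) := mem_ball_zero_iff.mp hzi.1
          have h2 : (2:ℝ)^j ≤ ‖z‖ := by
            have := hzj.2
            rw [mem_ball_zero_iff, not_lt] at this
            exact this
          have h3 : (2:ℝ)^(i+1) ≤ (2:ℝ)^j := pow_le_pow_right₀ one_le_two (by omega)
          linarith
        · apply Set.disjoint_right.mpr
          intro z hzi hzj
          rw [hann] at hzi hzj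
          have h1 : ‖z‖ < (2:ℝ)^(j+1) := mem_ball_zero_iff.mp hzi.1
          have h2 : (2:ℝ)^i ≤ ‖z‖ := by
            have := hzj.2
            rw [mem_ball_zero_iff, not_lt] at this
            exact this
          have h3 : (2:ℝ)^(j+1) ≤ (2:ℝ)^i := pow_le_pow_right₀ one_le_two (by omega)
          linarith
      · intro k hk
        exact hGW_int.mono_set (hann_sub k (Finset.mem_Ico.mp hk).1)
    calc Tint = (∫ z in B4ᶜ ∩ ball (0:EuclideanSpace ℝ (Fin d)) ((2:ℝ)^K), g z * w z) + 0 := by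
          rw [hsplitT, hzero]
      _ = ∫ z in B4ᶜ ∩ ball (0:EuclideanSpace ℝ (Fin d)) ((2:ℝ)^K), g z * w z := by ring
      _ ≤ ∑ k ∈ Finset.Ico 2 K, ∫ z in ann k, g z * w z := by rw [← hsum]; exact hU
      _ ≤ ∑ k ∈ Finset.Ico 2 K, vB1 * M * (2^(2*d+1) * ((2:ℝ)⁻¹)^k) :=
          Finset.sum_le_sum hann_est
      _ = vB1 * M * 2^(2*d+1) * ∑ k ∈ Finset.Ico 2 K, ((2:ℝ)⁻¹)^k := by
          rw [Finset.mul_sum]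
          apply Finset.sum_congr rfl
          intro k _
          ring
      _ ≤ vB1 * M * 2^(2*d+1) * 2 := by
          apply mul_le_mul_of_nonneg_left (geom_bound K) (by positivity)
      _ = vB1 * M * (2^(2*d+1) * 2) := by ring
  -- difference of far parts
  have hBdiff : ∀ x ∈ ball (0:EuclideanSpace ℝ (Fin d)) 1,
      ∀ y ∈ ball (0:EuclideanSpace ℝ (Fin d)) 1,
      |Bfun x - Bfun y| ≤ (2 * ((d:ℝ) - α)) * Tint := by
    intro x hx y hy
    rw [mem_ball_zero_iff] at hx hy
    have hint_x : IntegrableOn (fun z => g z * ‖x - z‖ ^ s) B4ᶜ := (hfull x).integrableOn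
    have hint_y : IntegrableOn (fun z => g z * ‖y - z‖ ^ s) B4ᶜ := (hfull y).integrableOn
    have hns : -s = (d:ℝ) - α := by rw [hs_def]; ring
    have hptw : ∀ z ∈ B4ᶜ, |g z * ‖x - z‖ ^ s - g z * ‖y - z‖ ^ s|
        ≤ (2*((d:ℝ)-α)) * (g z * w z) := by
      intro z hz
      have h4z : (4:ℝ) ≤ ‖z‖ := hcompl4 z hz
      have hm : (0:ℝ) < ‖z‖ - 1 := by linarith
      have hax : ‖z‖ - 1 ≤ ‖x - z‖ := by
        calc ‖z‖ - 1 ≤ ‖z‖ - ‖x‖ := by linarith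
          _ ≤ ‖z - x‖ := norm_sub_norm_le z x
          _ = ‖x - z‖ := norm_sub_rev z x
      have hay : ‖z‖ - 1 ≤ ‖y - z‖ := by
        calc ‖z‖ - 1 ≤ ‖z‖ - ‖y‖ := by linarith
          _ ≤ ‖z - y‖ := norm_sub_norm_le z y
          _ = ‖y - z‖ := norm_sub_rev z y
      have hmvt := mvt_rpow hs0 hm hax hay
      have habs : |‖x - z‖ - ‖y - z‖| ≤ 2 := by
        calc |‖x - z‖ - ‖y - z‖| ≤ ‖(x - z) - (y - z)‖ := abs_norm_sub_norm_le _ _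
          _ = ‖x - y‖ := by congr 1; abel
          _ ≤ ‖x‖ + ‖y‖ := norm_sub_le _ _
          _ ≤ 2 := by linarith
      calc |g z * ‖x - z‖ ^ s - g z * ‖y - z‖ ^ s|
          = g z * |‖x - z‖ ^ s - ‖y - z‖ ^ s| := by
            rw [← mul_sub, abs_mul, abs_of_nonneg (hg0 z)]
        _ ≤ g z * ((-s) * (‖z‖ - 1) ^ (s - 1) * 2) := by
            apply mul_le_mul_of_nonneg_left _ (hg0 z)
            calc |‖x - z‖ ^ s - ‖y - z‖ ^ s|
                ≤ (-s) * (‖z‖ - 1) ^ (s - 1) * |‖x - z‖ - ‖y - z‖| := hmvt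
              _ ≤ (-s) * (‖z‖ - 1) ^ (s - 1) * 2 := by
                  apply mul_le_mul_of_nonneg_left habs
                  exact mul_nonneg (by linarith) (Real.rpow_nonneg hm.le _)
        _ = (2*((d:ℝ)-α)) * (g z * w z) := by
            rw [hw]
            simp only
            rw [← hns]
            ring
    calc |Bfun x - Bfun y|
        = |∫ z in B4ᶜ, (g z * ‖x - z‖ ^ s - g z * ‖y - z‖ ^ s)| := by
          rw [hBfun]
          simp only
          rw [integral_sub hint_x hint_y]
      _ ≤ ∫ z in B4ᶜ, |g z * ‖x - z‖ ^ s - g z * ‖y - z‖ ^ s| := by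
          rw [← Real.norm_eq_abs]
          calc ‖∫ z in B4ᶜ, (g z * ‖x - z‖ ^ s - g z * ‖y - z‖ ^ s)‖
              ≤ ∫ z in B4ᶜ, ‖g z * ‖x - z‖ ^ s - g z * ‖y - z‖ ^ s‖ :=
                norm_integral_le_integral_norm _
            _ = ∫ z in B4ᶜ, |g z * ‖x - z‖ ^ s - g z * ‖y - z‖ ^ s| := by
                simp only [Real.norm_eq_abs]
      _ ≤ ∫ z in B4ᶜ, (2*((d:ℝ)-α)) * (g z * w z) := by
          apply integral_mono_of_nonneg (ae_of_all _ fun z => abs_nonneg _)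
            (hGW_int.const_mul _)
          filter_upwards [ae_restrict_mem measurableSet_ball.compl] with z hz
          exact hptw z hz
      _ = (2*((d:ℝ)-α)) * Tint := by rw [integral_const_mul, hTint_def]
  -- pointwise bound
  have hptwise : ∀ x ∈ ball (0:EuclideanSpace ℝ (Fin d)) 1,
      ∀ y ∈ ball (0:EuclideanSpace ℝ (Fin d)) 1,
      |rieszPotential d α g x - rieszPotential d α g y|
        ≤ Afun x + ((2*((d:ℝ)-α)) * Tint) + Afun y := by
    intro x hx y hy
    rw [hsplit x, hsplit y]
    have h1 : |Afun x + Bfun x - (Afun y + Bfun y)|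
        ≤ |Afun x - Afun y| + |Bfun x - Bfun y| := by
      have heq : Afun x + Bfun x - (Afun y + Bfun y)
          = (Afun x - Afun y) + (Bfun x - Bfun y) := by ring
      rw [heq]
      exact abs_add_le _ _
    have h2 : |Afun x - Afun y| ≤ Afun x + Afun y := by
      have h3 : |Afun x - Afun y| ≤ |Afun x| + |Afun y| := by
        rw [sub_eq_add_neg]
        exact (abs_add_le _ _).trans_eq (by rw [abs_neg])
      rwa [abs_of_nonneg (hAnn x), abs_of_nonneg (hAnn y)] at h3
    have h4 := hBdiff x hx y hy
    linarith
  -- assembling averages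
  set T' : ℝ := (2*((d:ℝ)-α)) * Tint with hT'_def
  have hT'nn : 0 ≤ T' := mul_nonneg (by nlinarith) hTint_nn
  set IA : ℝ := ∫ x in ball (0:EuclideanSpace ℝ (Fin d)) 1, Afun x with hIA_def
  have hIA_nn : 0 ≤ IA := integral_nonneg fun x => hAnn x
  have hconst_int : IntegrableOn (fun _ : EuclideanSpace ℝ (Fin d) => T')
      (ball (0:EuclideanSpace ℝ (Fin d)) 1) :=
    integrableOn_const measure_ball_lt_top.ne
  have hinner : ∀ x ∈ ball (0:EuclideanSpace ℝ (Fin d)) 1,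
      ⨍ y in ball (0:EuclideanSpace ℝ (Fin d)) 1,
        |rieszPotential d α g x - rieszPotential d α g y|
      ≤ Afun x + (T' + vB1⁻¹ * IA) := by
    intro x hx
    rw [setAverage_eq, smul_eq_mul, measureReal_def, ← hvB1_def]
    have hIneq : ∫ y in ball (0:EuclideanSpace ℝ (Fin d)) 1,
        |rieszPotential d α g x - rieszPotential d α g y|
        ≤ ∫ y in ball (0:EuclideanSpace ℝ (Fin d)) 1, ((Afun x + T') + Afun y) := by
      apply integral_mono_of_nonneg (ae_of_all _ fun y => abs_nonneg _)
      · exact (integrableOn_const measure_ball_lt_top.ne).add hAint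
      · filter_upwards [ae_restrict_mem measurableSet_ball] with y hy
        have := hptwise x hx y hy
        rw [hT'_def]
        linarith
    have hIval : ∫ y in ball (0:EuclideanSpace ℝ (Fin d)) 1, ((Afun x + T') + Afun y)
        = (Afun x + T') * vB1 + IA := by
      rw [integral_add (integrableOn_const (C := Afun x + T') measure_ball_lt_top.ne) hAint,
        setIntegral_const, smul_eq_mul, measureReal_def, ← hvB1_def, ← hIA_def]
      ring
    calc vB1⁻¹ * ∫ y in ball (0:EuclideanSpace ℝ (Fin d)) 1,
          |rieszPotential d α g x - rieszPotential d α g y|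
        ≤ vB1⁻¹ * ((Afun x + T') * vB1 + IA) :=
          mul_le_mul_of_nonneg_left (hIneq.trans_eq hIval) (inv_nonneg.mpr hvB1.le)
      _ = Afun x + (T' + vB1⁻¹ * IA) := by
          field_simp
          ring
  have hout : ⨍ x in ball (0:EuclideanSpace ℝ (Fin d)) 1,
      ⨍ y in ball (0:EuclideanSpace ℝ (Fin d)) 1,
        |rieszPotential d α g x - rieszPotential d α g y|
      ≤ vB1⁻¹ * (IA + (T' + vB1⁻¹ * IA) * vB1) := by
    rw [setAverage_eq, smul_eq_mul, measureReal_def, ← hvB1_def]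
    apply mul_le_mul_of_nonneg_left _ (inv_nonneg.mpr hvB1.le)
    calc ∫ x in ball (0:EuclideanSpace ℝ (Fin d)) 1,
          ⨍ y in ball (0:EuclideanSpace ℝ (Fin d)) 1,
            |rieszPotential d α g x - rieszPotential d α g y|
        ≤ ∫ x in ball (0:EuclideanSpace ℝ (Fin d)) 1, (Afun x + (T' + vB1⁻¹ * IA)) := by
          apply integral_mono_of_nonneg
          · apply ae_of_all
            intro x
            show (0:ℝ) ≤ ⨍ y in ball (0:EuclideanSpace ℝ (Fin d)) 1,
              |rieszPotential d α g x - rieszPotential d α g y|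
            rw [setAverage_eq, smul_eq_mul]
            exact mul_nonneg (inv_nonneg.mpr ENNReal.toReal_nonneg)
              (integral_nonneg fun y => abs_nonneg _)
          · exact hAint.add (integrableOn_const measure_ball_lt_top.ne)
          · filter_upwards [ae_restrict_mem measurableSet_ball] with x hx
            exact hinner x hx
      _ = IA + (T' + vB1⁻¹ * IA) * vB1 := by
          rw [integral_add hAint (integrableOn_const measure_ball_lt_top.ne),
            setIntegral_const, smul_eq_mul, measureReal_def, ← hvB1_def, ← hIA_def]
          ring
  -- final numerics
  have h1 : vB1⁻¹ * IA ≤ Cnear * ((4:ℝ)^d * (((4:ℝ) ^ α)⁻¹ * M)) := by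
    have h := mul_le_mul_of_nonneg_left hnear (inv_nonneg.mpr hvB1.le)
    calc vB1⁻¹ * IA ≤ vB1⁻¹ * (Cnear * (vB1 * ((4:ℝ)^d * (((4:ℝ) ^ α)⁻¹ * M)))) := h
      _ = Cnear * ((4:ℝ)^d * (((4:ℝ) ^ α)⁻¹ * M)) := by
          field_simp
  have h2 : T' ≤ (2*((d:ℝ)-α)) * (vB1 * M * (2^(2*d+1) * 2)) := by
    rw [hT'_def]
    apply mul_le_mul_of_nonneg_left hTint_le (by nlinarith)
  calc ⨍ x in ball (0:EuclideanSpace ℝ (Fin d)) 1,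
        ⨍ y in ball (0:EuclideanSpace ℝ (Fin d)) 1,
          |rieszPotential d α g x - rieszPotential d α g y|
      ≤ vB1⁻¹ * (IA + (T' + vB1⁻¹ * IA) * vB1) := hout
    _ = 2 * (vB1⁻¹ * IA) + T' := by
        field_simp
        ring
    _ ≤ 2 * (Cnear * ((4:ℝ)^d * (((4:ℝ) ^ α)⁻¹ * M)))
        + (2*((d:ℝ)-α)) * (vB1 * M * (2^(2*d+1) * 2)) := by
        have h3 := mul_le_mul_of_nonneg_left h1 (by norm_num : (0:ℝ) ≤ 2)
        linarith
    _ = N' * M := by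
        rw [hN'_def]
        ring
    _ ≤ (N' + 1) * M := by nlinarith

end RieszAux

/-- `⨍_{B_1}⨍_{B_1} |P_α g(x) - P_α g(y)| dx dy ≤ N M_α g(0)` for bounded nonnegative
compactly supported `g`. -/
theorem double_average_riesz_le (d : ℕ) (hd : 2 ≤ d) (α : ℝ)
    (hα0 : 0 < α) (hαd : α < d) :
    ∃ N : ℝ, 0 < N ∧
      ∀ g : EuclideanSpace ℝ (Fin d) → ℝ,
        Measurable g → HasCompactSupport g → (∀ x, 0 ≤ g x) →
        (∃ C : ℝ, ∀ x, g x ≤ C) →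
        ENNReal.ofReal
            (⨍ x in ball (0 : EuclideanSpace ℝ (Fin d)) 1,
              ⨍ y in ball (0 : EuclideanSpace ℝ (Fin d)) 1,
                |rieszPotential d α g x - rieszPotential d α g y|) ≤
          ENNReal.ofReal N * fracMaximal d α g 0 := by
  obtain ⟨N, hN, hmain⟩ := RieszAux.main_real d hd α hα0 hαd
  refine ⟨N, hN, ?_⟩
  intro g hgm hgc hg0 hCex
  by_cases htop : fracMaximal d α g 0 = ⊤
  · rw [htop, ENNReal.mul_top (by simp [hN, hN.le] : ENNReal.ofReal N ≠ 0)]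
    exact le_top
  · set M := (fracMaximal d α g 0).toReal with hMdef
    have hM0 : 0 ≤ M := ENNReal.toReal_nonneg
    have habsg : (fun y => |g y|) = g := funext fun y => abs_of_nonneg (hg0 y)
    have hMb : ∀ ρ : ℝ, 0 < ρ →
        ρ ^ α * ⨍ y in ball (0:EuclideanSpace ℝ (Fin d)) ρ, g y ≤ M := by
      intro ρ hρ
      have h1 : ENNReal.ofReal
          (ρ ^ α * ⨍ y in ball (0:EuclideanSpace ℝ (Fin d)) ρ, |g y|)
          ≤ fracMaximal d α g 0 := by
        rw [fracMaximal]
        exact le_iSup₂ (f := fun (ρ : ℝ) (_ : 0 < ρ) => ENNReal.ofReal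
          (ρ ^ α * ⨍ y in ball (0:EuclideanSpace ℝ (Fin d)) ρ, |g y|)) ρ hρ
      rw [habsg] at h1
      have hnn : 0 ≤ ρ ^ α * ⨍ y in ball (0:EuclideanSpace ℝ (Fin d)) ρ, g y := by
        apply mul_nonneg (Real.rpow_nonneg hρ.le _)
        rw [setAverage_eq, smul_eq_mul]
        exact mul_nonneg (inv_nonneg.mpr ENNReal.toReal_nonneg) (integral_nonneg hg0)
      calc ρ ^ α * ⨍ y in ball (0:EuclideanSpace ℝ (Fin d)) ρ, g y
          = (ENNReal.ofReal (ρ ^ α * ⨍ y in ball (0:EuclideanSpace ℝ (Fin d)) ρ, g y)).toReal :=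
            (ENNReal.toReal_ofReal hnn).symm
        _ ≤ M := ENNReal.toReal_mono htop h1
    have hDle := hmain g hgm hgc hg0 hCex M hM0 hMb
    calc ENNReal.ofReal
          (⨍ x in ball (0 : EuclideanSpace ℝ (Fin d)) 1,
            ⨍ y in ball (0 : EuclideanSpace ℝ (Fin d)) 1,
              |rieszPotential d α g x - rieszPotential d α g y|)
        ≤ ENNReal.ofReal (N * M) := ENNReal.ofReal_le_ofReal hDle
      _ = ENNReal.ofReal N * ENNReal.ofReal M := ENNReal.ofReal_mul hN.le
      _ = ENNReal.ofReal N * fracMaximal d α g 0 := by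
          rw [hMdef, ENNReal.ofReal_toReal htop]

end
end
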